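/- arXiv:1903.07050 — 4 statements merged into one kernel-verified Lean document; each statement's English description precedes it below -/
import Mathlib

section
/- Let d ≥ 1, η ∈ (1/2, 1], C ≥ 0, and let (γ_n)_{n≥1} be nonnegative reals with γ_n = o(n^{-η}). Let (x_n)_{n≥1} be a sequence of ℝ^d-valued random variables with ‖x_{n+1} − x_n‖ ≤ C γ_n almost surely for all n, and let (τ_n)_{n≥1} be nonnegative integer-valued random variables with τ_n ≤ n for all n and sup_{n≥1} E[τ_n²] < ∞. Then almost surely ‖x_n − x_{n−τ_n}‖ → 0 as n → ∞. -/
open Filter MeasureTheory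
open scoped ENNReal

lemma dspg_tele {E : Type*} [NormedAddCommGroup E] (y : ℕ → E) (b : ℕ → ℝ)
    (h : ∀ k, ‖y (k + 1) - y k‖ ≤ b k) :
    ∀ m n, m ≤ n → ‖y n - y m‖ ≤ ∑ k ∈ Finset.Ico m n, b k := by
  intro m n hmn
  induction n, hmn using Nat.le_induction with
  | base => simp
  | succ n hmn ih =>
    rw [Finset.sum_Ico_succ_top hmn]
    have : y (n + 1) - y m = (y n - y m) + (y (n + 1) - y n) := by abel
    calc ‖y (n + 1) - y m‖ ≤ ‖y n - y m‖ + ‖y (n + 1) - y n‖ := by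
          rw [this]; exact norm_add_le _ _
      _ ≤ (∑ k ∈ Finset.Ico m n, b k) + b n := add_le_add ih (h n)

lemma dspg_det_bound {E : Type*} [NormedAddCommGroup E] (C α η : ℝ) (hC : 0 ≤ C)
    (hα : 0 < α) (hαη : α < η) (hα1 : α < 1)
    (γ : ℕ → ℝ) (hγ : ∀ n, 0 ≤ γ n)
    (y : ℕ → E) (hy : ∀ k, ‖y (k + 1) - y k‖ ≤ C * γ k)
    (T : ℕ → ℕ) (hT : ∀ n, T n ≤ n)
    (hTα : ∀ᶠ n in atTop, (T n : ℝ) ≤ (n : ℝ) ^ α)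
    (hγ' : ∀ᶠ k : ℕ in atTop, (k : ℝ) ^ η * γ k ≤ 1) :
    Tendsto (fun n => ‖y n - y (n - T n)‖) atTop (nhds 0) := by
  have hη : 0 < η := lt_trans hα hαη
  obtain ⟨N₁, hN₁⟩ := (hγ'.and (eventually_ge_atTop 1)).exists_forall_of_atTop
  have hγle : ∀ k, N₁ ≤ k → γ k ≤ (k : ℝ) ^ (-η) := by
    intro k hk
    obtain ⟨h1, h2⟩ := hN₁ k hk
    have hkpos : (0:ℝ) < k := by exact_mod_cast h2
    have hkη : (0:ℝ) < (k:ℝ) ^ η := Real.rpow_pos_of_pos hkpos η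
    rw [Real.rpow_neg hkpos.le]
    have hinv : ((k:ℝ) ^ η)⁻¹ * (k:ℝ) ^ η = 1 := inv_mul_cancel₀ hkη.ne'
    nlinarith [hγ k]
  refine squeeze_zero' (g := fun n : ℕ => C * 2 ^ η * (n : ℝ) ^ (α - η))
    (Eventually.of_forall fun n => norm_nonneg _) ?_ ?_
  · have h2 : ∀ᶠ n : ℕ in atTop, (2:ℝ) ≤ (n : ℝ) ^ (1 - α) := by
      have := (tendsto_rpow_atTop (by linarith : 0 < 1 - α)).comp
        tendsto_natCast_atTop_atTop (α := ℕ)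
      exact this.eventually_ge_atTop 2
    filter_upwards [hTα, h2, eventually_ge_atTop (2 * N₁ + 2), eventually_ge_atTop 1]
      with n hTn h2n hnN hn1
    have npos : (0:ℝ) < n := by exact_mod_cast hn1
    have hαhalf : (n:ℝ) ^ α ≤ (n:ℝ) / 2 := by
      have hmul : (n:ℝ) ^ α * (n:ℝ) ^ (1 - α) = n := by
        rw [← Real.rpow_add npos]; simp
      have hp : (0:ℝ) < (n:ℝ) ^ α := Real.rpow_pos_of_pos npos α
      nlinarith
    have hTn2 : (T n : ℝ) ≤ (n:ℝ) / 2 := hTn.trans hαhalf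
    have hcast : ((n - T n : ℕ) : ℝ) = (n:ℝ) - T n := by
      exact_mod_cast Nat.cast_sub (hT n)
    have hterm : ∀ k ∈ Finset.Ico (n - T n) n, C * γ k ≤ C * ((n:ℝ)/2) ^ (-η) := by
      intro k hk
      have hk1 : n - T n ≤ k := (Finset.mem_Ico.1 hk).1
      have hkR : (n:ℝ) / 2 ≤ (k:ℝ) := by
        have : ((n - T n : ℕ) : ℝ) ≤ (k:ℝ) := by exact_mod_cast hk1
        rw [hcast] at this; linarith
      have hkN₁ : N₁ ≤ k := by
        have hN₁R : (N₁ : ℝ) ≤ (k:ℝ) := by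
          have : (2 * N₁ + 2 : ℝ) ≤ (n:ℝ) := by exact_mod_cast hnN
          linarith
        exact_mod_cast hN₁R
      have h1 : γ k ≤ (k:ℝ) ^ (-η) := hγle k hkN₁
      have h2' : (k:ℝ) ^ (-η) ≤ ((n:ℝ)/2) ^ (-η) := by
        apply Real.rpow_le_rpow_of_nonpos (by linarith) hkR (by linarith)
      exact mul_le_mul_of_nonneg_left (h1.trans h2') hC
    have hsum : ‖y n - y (n - T n)‖ ≤ ∑ k ∈ Finset.Ico (n - T n) n, C * γ k :=
      dspg_tele y _ hy _ _ (Nat.sub_le n (T n))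
    have hcard : (Finset.Ico (n - T n) n).card = T n := by
      rw [Nat.card_Ico, Nat.sub_sub_self (hT n)]
    have hsum2 : (∑ k ∈ Finset.Ico (n - T n) n, C * γ k)
        ≤ (T n : ℝ) * (C * ((n:ℝ)/2) ^ (-η)) := by
      have := Finset.sum_le_card_nsmul _ _ _ hterm
      rw [hcard] at this
      simpa [nsmul_eq_mul] using this
    have hb : (0:ℝ) ≤ C * ((n:ℝ)/2) ^ (-η) :=
      mul_nonneg hC (Real.rpow_nonneg (by linarith) _)
    have hsum3 : (T n : ℝ) * (C * ((n:ℝ)/2) ^ (-η))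
        ≤ (n:ℝ) ^ α * (C * ((n:ℝ)/2) ^ (-η)) :=
      mul_le_mul_of_nonneg_right hTn hb
    have hrw : (n:ℝ) ^ α * (C * ((n:ℝ)/2) ^ (-η)) = C * 2 ^ η * (n:ℝ) ^ (α - η) := by
      rw [Real.div_rpow npos.le (by norm_num : (0:ℝ) ≤ 2), Real.rpow_neg npos.le,
        Real.rpow_neg (by norm_num : (0:ℝ) ≤ 2), div_eq_mul_inv, inv_inv,
        sub_eq_add_neg, Real.rpow_add npos, Real.rpow_neg npos.le η]
      ring
    calc ‖y n - y (n - T n)‖ ≤ _ := hsum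
      _ ≤ _ := hsum2
      _ ≤ _ := hsum3
      _ = _ := hrw
  · have h0 : Tendsto (fun n : ℕ => (n:ℝ) ^ (α - η)) atTop (nhds 0) := by
      have := (tendsto_rpow_neg_atTop (by linarith : 0 < η - α)).comp
        (tendsto_natCast_atTop_atTop (R := ℝ))
      simpa [Function.comp_def, neg_sub] using this
    simpa using h0.const_mul (C * 2 ^ η)

lemma dspg_bc {Ω : Type*} [MeasurableSpace Ω] (μ : Measure Ω) [IsProbabilityMeasure μ]
    (τ : ℕ → Ω → ℕ) (hτ_meas : ∀ n, Measurable (τ n))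
    (B : ℝ≥0∞) (hB : B < ⊤) (α : ℝ) (hα : 1 < 2 * α)
    (hmom : ∀ n, 1 ≤ n → ∫⁻ ω, ((τ n ω : ℝ≥0∞)) ^ 2 ∂μ ≤ B) :
    ∀ᵐ ω ∂μ, ∀ᶠ n in atTop, (τ n ω : ℝ) ≤ (n : ℝ) ^ α := by
  set s : ℕ → Set Ω := fun n => {ω | ((n + 1 : ℕ) : ℝ) ^ α ≤ (τ (n + 1) ω : ℝ)} with hs
  have hμs : ∀ n, μ (s n) ≤ B * ENNReal.ofReal ((((n + 1 : ℕ) : ℝ) ^ (2 * α))⁻¹) := by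
    intro n
    have hpos : (0:ℝ) < ((n + 1 : ℕ) : ℝ) ^ (2 * α) :=
      Real.rpow_pos_of_pos (by positivity) _
    set ε : ℝ≥0∞ := ENNReal.ofReal (((n + 1 : ℕ) : ℝ) ^ (2 * α)) with hε
    have hε0 : ε ≠ 0 := by rw [hε]; exact (ENNReal.ofReal_pos.2 hpos).ne'
    have hεtop : ε ≠ ⊤ := ENNReal.ofReal_ne_top
    have hmeas : AEMeasurable (fun ω => ((τ (n + 1) ω : ℝ≥0∞)) ^ 2) μ :=
      ((measurable_from_top.comp (hτ_meas (n + 1))).pow_const 2).aemeasurable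
    have markov := mul_meas_ge_le_lintegral₀ hmeas ε
    have hsub : s n ⊆ {ω | ε ≤ ((τ (n + 1) ω : ℝ≥0∞)) ^ 2} := by
      intro ω hω
      have hω' : ((n + 1 : ℕ) : ℝ) ^ α ≤ (τ (n + 1) ω : ℝ) := hω
      have hsq : ((n + 1 : ℕ) : ℝ) ^ (2 * α) ≤ ((τ (n + 1) ω : ℝ)) ^ 2 := by
        have h1 : ((n + 1 : ℕ) : ℝ) ^ (2 * α) = (((n + 1 : ℕ) : ℝ) ^ α) ^ 2 := by
          rw [← Real.rpow_natCast (((n + 1 : ℕ) : ℝ) ^ α) 2, ← Real.rpow_mul (by positivity)]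
          norm_num [mul_comm]
        rw [h1]
        exact pow_le_pow_left₀ (Real.rpow_nonneg (by positivity) _) hω' 2
      have : ε ≤ ENNReal.ofReal (((τ (n + 1) ω : ℝ)) ^ 2) := ENNReal.ofReal_le_ofReal hsq
      calc ε ≤ ENNReal.ofReal (((τ (n + 1) ω : ℝ)) ^ 2) := this
        _ = ((τ (n + 1) ω : ℝ≥0∞)) ^ 2 := by
            rw [ENNReal.ofReal_pow (by positivity), ENNReal.ofReal_natCast]
    have h1 : ε * μ (s n) ≤ B := by
      calc ε * μ (s n) ≤ ε * μ {ω | ε ≤ ((τ (n + 1) ω : ℝ≥0∞)) ^ 2} :=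
            mul_le_mul_right (measure_mono hsub) ε
        _ ≤ ∫⁻ ω, ((τ (n + 1) ω : ℝ≥0∞)) ^ 2 ∂μ := markov
        _ ≤ B := hmom (n + 1) (by omega)
    have h2 : μ (s n) ≤ B / ε :=
      (ENNReal.le_div_iff_mul_le (Or.inl hε0) (Or.inl hεtop)).2 (by rwa [mul_comm] at h1)
    calc μ (s n) ≤ B / ε := h2
      _ = B * ε⁻¹ := by rw [div_eq_mul_inv]
      _ = B * ENNReal.ofReal ((((n + 1 : ℕ) : ℝ) ^ (2 * α))⁻¹) := by
          rw [hε, ENNReal.ofReal_inv_of_pos hpos]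
  have hsummable : Summable (fun n : ℕ => ((((n + 1 : ℕ) : ℝ)) ^ (2 * α))⁻¹) := by
    have h := (Real.summable_nat_rpow_inv (p := 2 * α)).2 hα
    exact (summable_nat_add_iff 1).2 h
  have htsum : (∑' n, μ (s n)) ≠ ⊤ := by
    have h1 : (∑' n, μ (s n)) ≤ ∑' n, B * ENNReal.ofReal ((((n + 1 : ℕ) : ℝ) ^ (2 * α))⁻¹) :=
      ENNReal.tsum_le_tsum hμs
    have h2 : (∑' n, B * ENNReal.ofReal ((((n + 1 : ℕ) : ℝ) ^ (2 * α))⁻¹))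
        = B * ENNReal.ofReal (∑' n, (((((n + 1 : ℕ) : ℝ)) ^ (2 * α))⁻¹)) := by
      rw [ENNReal.tsum_mul_left, ENNReal.ofReal_tsum_of_nonneg (fun n => by positivity) hsummable]
    refine ne_top_of_le_ne_top ?_ h1
    rw [h2]
    exact ENNReal.mul_ne_top hB.ne ENNReal.ofReal_ne_top
  have hae := ae_eventually_notMem htsum
  filter_upwards [hae] with ω hω
  rw [eventually_atTop] at hω ⊢
  obtain ⟨N, hN⟩ := hω
  refine ⟨N + 1, fun n hn => ?_⟩
  obtain ⟨m, rfl⟩ : ∃ m, n = m + 1 := ⟨n - 1, by omega⟩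
  have := hN m (by omega)
  simp only [hs, Set.mem_setOf_eq, not_le] at this
  exact this.le

/-- Proposition 1 of the paper: for iterates whose increments are bounded by a
constant times the step-size (with `γ n = o(n ^ (-η))`), the errors due to
communication delays with uniformly bounded second moments vanish
asymptotically, almost surely. -/
theorem dspg_delay_error_vanishes
    {Ω : Type*} [MeasurableSpace Ω] (μ : Measure Ω) [IsProbabilityMeasure μ]
    (d : ℕ) (hd : 1 ≤ d) (η : ℝ) (hη₁ : 1 / 2 < η) (hη₂ : η ≤ 1)
    (C : ℝ) (hC : 0 ≤ C)
    (γ : ℕ → ℝ) (hγ : ∀ n, 0 ≤ γ n)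
    (hγo : Tendsto (fun n : ℕ => (n : ℝ) ^ η * γ n) atTop (nhds 0))
    (x : ℕ → Ω → EuclideanSpace ℝ (Fin d))
    (hx : ∀ n, ∀ᵐ ω ∂μ, ‖x (n + 1) ω - x n ω‖ ≤ C * γ n)
    (τ : ℕ → Ω → ℕ) (hτ_meas : ∀ n, Measurable (τ n))
    (hτ_le : ∀ n ω, τ n ω ≤ n)
    (B : ℝ≥0∞) (hB : B < ⊤)
    (hmom : ∀ n, 1 ≤ n → ∫⁻ ω, ((τ n ω : ℝ≥0∞)) ^ 2 ∂μ ≤ B) :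
    ∀ᵐ ω ∂μ, Tendsto (fun n => ‖x n ω - x (n - τ n ω) ω‖) atTop (nhds 0) := by
  set α : ℝ := (2 * η + 1) / 4 with hαdef
  have hBC := dspg_bc μ τ hτ_meas B hB α (by rw [hαdef]; linarith) hmom
  have hincr : ∀ᵐ ω ∂μ, ∀ n, ‖x (n + 1) ω - x n ω‖ ≤ C * γ n := ae_all_iff.2 hx
  have hγ' : ∀ᶠ k : ℕ in atTop, (k : ℝ) ^ η * γ k ≤ 1 :=
    hγo.eventually (eventually_le_nhds one_pos)
  filter_upwards [hBC, hincr] with ω h1 h2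
  exact dspg_det_bound C α η hC (by rw [hαdef]; linarith) (by rw [hαdef]; linarith)
    (by rw [hαdef]; linarith) γ hγ (fun n => x n ω) h2 (fun n => τ n ω)
    (fun n => hτ_le n ω) h1 hγ'
end

section
/- Let A be a symmetric d × d real matrix, let F(x) = xᵀ A x, let c > 0, let 1 ≤ i ≤ d, and let Δ(1), …, Δ(d) be independent random variables each taking values +1 and −1 with probability 1/2. Then for every x ∈ ℝ^d, the variance of the SPSA gradient estimator satisfies Var[(F(x + cΔ) − F(x − cΔ))/(2c Δ(i))] = 4 Σ_{j ≠ i} ((A x)(j))². -/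
open MeasureTheory ProbabilityTheory Matrix

/-- For the quadratic objective `F(x) = xᵀ A x` with `A` symmetric, the
variance of the SPSA gradient estimator with independent symmetric Bernoulli
perturbations equals `4 Σ_{j ≠ i} ((A x)(j))²`. -/
theorem spsa_estimator_variance_quadratic
    {Ω : Type*} [MeasurableSpace Ω] (μ : Measure Ω) [IsProbabilityMeasure μ]
    {d : ℕ} (A : Matrix (Fin d) (Fin d) ℝ) (hA : A.IsSymm)
    (F : (Fin d → ℝ) → ℝ) (hFdef : ∀ x, F x = x ⬝ᵥ A.mulVec x)
    (c : ℝ) (hc : 0 < c) (i : Fin d)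
    (Δ : Fin d → Ω → ℝ) (hmeas : ∀ j, Measurable (Δ j))
    (hindep : iIndepFun Δ μ)
    (hval : ∀ j ω, Δ j ω = 1 ∨ Δ j ω = -1)
    (hsym : ∀ j, μ {ω | Δ j ω = 1} = 1 / 2)
    (x : Fin d → ℝ) :
    variance (fun ω =>
        (F (x + c • fun j => Δ j ω) - F (x - c • fun j => Δ j ω)) /
          (2 * c * Δ i ω)) μ
      = 4 * ∑ j ∈ Finset.univ.erase i, (A.mulVec x j) ^ 2 := by
  set a : Fin d → ℝ := A.mulVec x with ha
  have hsq : ∀ j ω, Δ j ω * Δ j ω = 1 := by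
    intro j ω; rcases hval j ω with h | h <;> rw [h] <;> ring
  have hne0 : ∀ j ω, Δ j ω ≠ 0 := by
    intro j ω; rcases hval j ω with h | h <;> rw [h] <;> norm_num
  have habs : ∀ j ω, ‖Δ j ω‖ ≤ 1 := by
    intro j ω; rcases hval j ω with h | h <;> simp [h]
  have hasm : ∀ j, AEStronglyMeasurable (Δ j) μ := fun j => (hmeas j).aestronglyMeasurable
  -- pointwise identification of the estimator
  have hX : (fun ω =>
        (F (x + c • fun j => Δ j ω) - F (x - c • fun j => Δ j ω)) /
          (2 * c * Δ i ω))
      = fun ω => 2 * ∑ j, a j * (Δ j ω * Δ i ω) := by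
    funext ω
    set δ : Fin d → ℝ := fun j => Δ j ω with hδ
    have hsymm : x ⬝ᵥ A.mulVec δ = δ ⬝ᵥ A.mulVec x := by
      rw [Matrix.dotProduct_mulVec, ← Matrix.mulVec_transpose, hA, dotProduct_comm]
    rw [hFdef, hFdef]
    have hnum : (x + c • δ) ⬝ᵥ A.mulVec (x + c • δ) - (x - c • δ) ⬝ᵥ A.mulVec (x - c • δ)
        = 4 * c * (δ ⬝ᵥ a) := by
      simp only [Matrix.mulVec_add, Matrix.mulVec_sub, Matrix.mulVec_smul,
        add_dotProduct, sub_dotProduct, dotProduct_add,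
        dotProduct_sub, smul_dotProduct, dotProduct_smul,
        smul_eq_mul, ha]
      rw [← hsymm]; ring
    rw [hnum, div_eq_iff (mul_ne_zero (mul_ne_zero two_ne_zero hc.ne') (hne0 i ω))]
    simp only [dotProduct, Finset.mul_sum, Finset.sum_mul]
    refine Finset.sum_congr rfl fun j _ => ?_
    simp only [hδ]
    have h1 : Δ i ω * Δ i ω = 1 := hsq i ω
    linear_combination (-(4 * c * a j * Δ j ω)) * h1
  -- integrability facts
  have hint1 : ∀ j, Integrable (Δ j) μ := fun j =>
    (integrable_const (1 : ℝ)).mono' (hasm j) (Filter.Eventually.of_forall (habs j))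
  have hint2 : ∀ j k, Integrable (fun ω => Δ j ω * Δ k ω) μ := by
    intro j k
    refine (integrable_const (1 : ℝ)).mono' ((hmeas j).mul (hmeas k)).aestronglyMeasurable
      (Filter.Eventually.of_forall fun ω => ?_)
    calc ‖Δ j ω * Δ k ω‖ = ‖Δ j ω‖ * ‖Δ k ω‖ := norm_mul _ _
      _ ≤ 1 * 1 := mul_le_mul (habs j ω) (habs k ω) (norm_nonneg _) zero_le_one
      _ = 1 := one_mul 1
  -- mean of each Δ j is zero
  have hEΔ : ∀ j, ∫ ω, Δ j ω ∂μ = 0 := by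
    intro j
    have hs : MeasurableSet {ω | Δ j ω = 1} := hmeas j (measurableSet_singleton 1)
    have heq : (fun ω => Δ j ω)
        = fun ω => 2 * Set.indicator {ω | Δ j ω = 1} (fun _ => (1 : ℝ)) ω - 1 := by
      funext ω
      by_cases h : ω ∈ {ω | Δ j ω = 1}
      · rw [Set.indicator_of_mem h]
        rw [Set.mem_setOf_eq] at h
        rw [h]; norm_num
      · rw [Set.indicator_of_notMem h]
        rw [Set.mem_setOf_eq] at h
        rw [(hval j ω).resolve_left h]; norm_num
    rw [heq, integral_sub (((integrable_const (1:ℝ)).indicator hs).const_mul 2)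
      (integrable_const 1)]
    rw [integral_const_mul, integral_indicator_const (1 : ℝ) hs, measureReal_def, hsym j, integral_const]
    simp [ENNReal.toReal_div]
  -- second moments
  have hEΔΔ : ∀ j k, ∫ ω, Δ j ω * Δ k ω ∂μ = if j = k then 1 else 0 := by
    intro j k
    by_cases hjk : j = k
    · subst hjk
      simp only [hsq j, if_pos rfl]
      simp
    · rw [if_neg hjk]
      have := (hindep.indepFun hjk).integral_mul_eq_mul_integral (hasm j) (hasm k)
      have heq : (fun ω => Δ j ω * Δ k ω) = Δ j * Δ k := rfl
      rw [heq, this, hEΔ j, zero_mul]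
  -- the estimator
  rw [hX]
  set X : Ω → ℝ := fun ω => 2 * ∑ j, a j * (Δ j ω * Δ i ω) with hXdef
  have hXasm : AEStronglyMeasurable X μ := by
    have : Measurable X :=
      (Finset.measurable_sum Finset.univ fun j _ =>
        ((hmeas j).mul (hmeas i)).const_mul (a j)).const_mul 2
    exact this.aestronglyMeasurable
  have hXmem : MemLp X 2 μ := by
    refine MemLp.of_bound hXasm (2 * ∑ j, |a j|) (Filter.Eventually.of_forall fun ω => ?_)
    have h2 : ‖X ω‖ = 2 * |∑ j, a j * (Δ j ω * Δ i ω)| := by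
      rw [hXdef]
      rw [Real.norm_eq_abs, abs_mul]
      norm_num
    have h3 : |∑ j, a j * (Δ j ω * Δ i ω)| ≤ ∑ j, |a j| := by
      refine (Finset.abs_sum_le_sum_abs _ _).trans (Finset.sum_le_sum fun j _ => ?_)
      rw [abs_mul, abs_mul]
      have hb1 : |Δ j ω| ≤ 1 := by simpa [Real.norm_eq_abs] using habs j ω
      have hb2 : |Δ i ω| ≤ 1 := by simpa [Real.norm_eq_abs] using habs i ω
      calc |a j| * (|Δ j ω| * |Δ i ω|) ≤ |a j| * 1 :=
            mul_le_mul_of_nonneg_left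
              (mul_le_one₀ hb1 (abs_nonneg _) hb2) (abs_nonneg _)
        _ = |a j| := mul_one _
    rw [h2]; linarith
  have hintX : ∀ j, Integrable (fun ω => a j * (Δ j ω * Δ i ω)) μ := fun j =>
    (hint2 j i).const_mul (a j)
  -- mean of X
  have hEX : ∫ ω, X ω ∂μ = 2 * a i := by
    simp only [hXdef]
    rw [integral_const_mul, integral_finset_sum _ fun j _ => hintX j]
    have : ∀ j, ∫ ω, a j * (Δ j ω * Δ i ω) ∂μ = a j * if j = i then 1 else 0 := by
      intro j; rw [integral_const_mul, hEΔΔ j i]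
    simp only [this]
    simp
  -- second moment of X
  have hEX2 : ∫ ω, X ω ^ 2 ∂μ = 4 * ∑ j, a j ^ 2 := by
    have hXsq : ∀ ω, X ω ^ 2 = ∑ j, ∑ k, 4 * (a j * a k) * (Δ j ω * Δ k ω) := by
      intro ω
      rw [hXdef]
      rw [show (2 * ∑ j, a j * (Δ j ω * Δ i ω)) ^ 2
          = 4 * ((∑ j, a j * (Δ j ω * Δ i ω)) * (∑ k, a k * (Δ k ω * Δ i ω))) from by ring]
      rw [Finset.sum_mul_sum, Finset.mul_sum]
      refine Finset.sum_congr rfl fun j _ => ?_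
      rw [Finset.mul_sum]
      refine Finset.sum_congr rfl fun k _ => ?_
      have h1 : Δ i ω * Δ i ω = 1 := hsq i ω
      linear_combination (4 * a j * a k * Δ j ω * Δ k ω) * h1
    have hint3 : ∀ j k, Integrable (fun ω => 4 * (a j * a k) * (Δ j ω * Δ k ω)) μ :=
      fun j k => (hint2 j k).const_mul _
    calc ∫ ω, X ω ^ 2 ∂μ = ∫ ω, ∑ j, ∑ k, 4 * (a j * a k) * (Δ j ω * Δ k ω) ∂μ := by
          exact integral_congr_ae (Filter.Eventually.of_forall fun ω => hXsq ω)
      _ = ∑ j, ∑ k, ∫ ω, 4 * (a j * a k) * (Δ j ω * Δ k ω) ∂μ := by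
          rw [integral_finset_sum _ fun j _ => integrable_finset_sum _ fun k _ => hint3 j k]
          exact Finset.sum_congr rfl fun j _ => integral_finset_sum _ fun k _ => hint3 j k
      _ = ∑ j, ∑ k, 4 * (a j * a k) * if j = k then 1 else 0 := by
          refine Finset.sum_congr rfl fun j _ => Finset.sum_congr rfl fun k _ => ?_
          rw [integral_const_mul, hEΔΔ j k]
      _ = ∑ j : Fin d, 4 * (a j * a j) := by
          refine Finset.sum_congr rfl fun j _ => ?_
          simp [mul_ite, mul_one, mul_zero]
      _ = 4 * ∑ j, a j ^ 2 := by
          rw [Finset.mul_sum]; refine Finset.sum_congr rfl fun j _ => by ring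
  rw [variance_eq_sub hXmem]
  show (∫ ω, X ω ^ 2 ∂μ) - (∫ ω, X ω ∂μ) ^ 2 = 4 * ∑ j ∈ Finset.univ.erase i, a j ^ 2
  rw [hEX2, hEX]
  have hsplit : ∑ j, a j ^ 2 = ∑ j ∈ Finset.univ.erase i, a j ^ 2 + a i ^ 2 :=
    (Finset.sum_erase_add Finset.univ _ (Finset.mem_univ i)).symm
  rw [hsplit]; ring
end

section
/- Let F : ℝ^d → ℝ be three times continuously differentiable with ‖D³F(y)‖ ≤ M for all y ∈ ℝ^d (operator norm of the third derivative as a trilinear map). Let c > 0, let 1 ≤ i ≤ d, and let Δ(1), …, Δ(d) be independent random variables each taking values +1 and −1 with probability 1/2. Then for every x ∈ ℝ^d, |E[(F(x + cΔ) − F(x − cΔ))/(2c Δ(i))] − ∂F(x)/∂x(i)| ≤ (M d^{3/2} / 6) c². In particular, the bias of the SPSA gradient estimator with constant sensitivity parameter c is O(c²). -/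
open MeasureTheory ProbabilityTheory



/-- Comparison lemma: if `|φ'| ≤ A t^n` on `[0,1]` and `φ 0 = 0`, then
`|φ t| ≤ A t^(n+1)/(n+1)` on `[0,1]`. -/
lemma spsa_deriv_growth {φ φ' : ℝ → ℝ} (h : ∀ t, HasDerivAt φ (φ' t) t) (h0 : φ 0 = 0)
    {A : ℝ} {n : ℕ} (hb : ∀ t ∈ Set.Icc (0:ℝ) 1, |φ' t| ≤ A * t ^ n) :
    ∀ t ∈ Set.Icc (0:ℝ) 1, |φ t| ≤ A * t ^ (n + 1) / (n + 1) := by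
  have key : ∀ (ψ ψ' : ℝ → ℝ), (∀ t, HasDerivAt ψ (ψ' t) t) → ψ 0 = 0 →
      (∀ t ∈ Set.Icc (0:ℝ) 1, ψ' t ≤ A * t ^ n) →
      ∀ t ∈ Set.Icc (0:ℝ) 1, ψ t ≤ A * t ^ (n + 1) / (n + 1) := by
    intro ψ ψ' hd hψ0 hle t ht
    set g : ℝ → ℝ := fun s => A * s ^ (n + 1) / (n + 1) - ψ s with hg
    have hgd : ∀ s, HasDerivAt g (A * s ^ n - ψ' s) s := by
      intro s
      have h1 : HasDerivAt (fun s : ℝ => A * s ^ (n + 1) / (n + 1))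
          (A * ((n + 1) * s ^ n) / (n + 1)) s := by
        simpa [mul_div_assoc] using
          ((hasDerivAt_pow (n + 1) s).const_mul A).div_const ((n : ℝ) + 1)
      have h2 : A * ((n + 1) * s ^ n) / (n + 1) = A * s ^ n := by
        field_simp
      exact (h2 ▸ h1).sub (hd s)
    have hmono : MonotoneOn g (Set.Icc (0:ℝ) 1) := by
      apply monotoneOn_of_deriv_nonneg (convex_Icc 0 1)
      · exact (Continuous.continuousOn (by
          have : Differentiable ℝ g := fun s => (hgd s).differentiableAt
          exact this.continuous))
      · intro s _; exact (hgd s).differentiableAt.differentiableWithinAt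
      · intro s hs
        rw [interior_Icc] at hs
        rw [(hgd s).deriv]
        have := hle s ⟨le_of_lt hs.1, le_of_lt hs.2⟩
        linarith
    have h1 : g 0 ≤ g t := hmono (Set.left_mem_Icc.2 zero_le_one) ht ht.1
    have : g 0 = 0 := by simp [hg, hψ0]
    rw [this] at h1
    simp only [hg] at h1
    linarith
  intro t ht
  have hup := key φ φ' h h0 (fun s hs => (abs_le.1 (hb s hs)).2) t ht
  have hdown := key (fun s => -φ s) (fun s => -φ' s) (fun s => (h s).neg) (by simp [h0])
      (fun s hs => by show -φ' s ≤ A * s ^ n; have := (abs_le.1 (hb s hs)).1; linarith) t ht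
  rw [abs_le]; constructor <;> [skip; exact hup]
  linarith

/-- Symmetric third-order Taylor bound. -/
lemma spsa_taylor_bound {E : Type*} [NormedAddCommGroup E] [NormedSpace ℝ E] {F : E → ℝ}
    (hF : ContDiff ℝ 3 F) {M : ℝ} (hM : ∀ y, ‖iteratedFDeriv ℝ 3 F y‖ ≤ M) (x u : E) :
    |F (x + u) - F (x - u) - 2 * fderiv ℝ F x u| ≤ M * ‖u‖ ^ 3 / 3 := by
  have hM0 : 0 ≤ M := (norm_nonneg _).trans (hM x)
  set f' : E → E →L[ℝ] ℝ := fderiv ℝ F with hf'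
  have hFd : Differentiable ℝ F := hF.differentiable (by norm_num)
  have hf'cd : ContDiff ℝ 2 f' := hF.fderiv_right (by norm_num)
  have hf'd : Differentiable ℝ f' := hf'cd.differentiable (by norm_num)
  have hT : Differentiable ℝ (iteratedFDeriv ℝ 2 F) :=
    hF.differentiable_iteratedFDeriv (by norm_num)
  have hlip : ∀ y z : E, ‖iteratedFDeriv ℝ 2 F y - iteratedFDeriv ℝ 2 F z‖ ≤ M * ‖y - z‖ := by
    intro y z
    exact Convex.norm_image_sub_le_of_norm_fderiv_le (fun w _ => (hT w))
      (fun w _ => by rw [norm_fderiv_iteratedFDeriv]; exact hM w) convex_univ trivial trivial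
  have hline : ∀ (w : E) (t : ℝ), HasDerivAt (fun s : ℝ => x + s • w) w t := by
    intro w t
    simpa using ((hasDerivAt_id t).smul_const w).const_add x
  have hFl : ∀ (w : E) (t : ℝ), HasDerivAt (fun s => F (x + s • w)) (f' (x + t • w) w) t := by
    intro w t
    exact (hFd _).hasFDerivAt.comp_hasDerivAt t (hline w t)
  have hf'l : ∀ (w : E) (t : ℝ),
      HasDerivAt (fun s => f' (x + s • w) u) (fderiv ℝ f' (x + t • w) w u) t := by
    intro w t
    have h1 : HasFDerivAt (fun y => f' y u)
        ((ContinuousLinearMap.apply ℝ ℝ u).comp (fderiv ℝ f' (x + t • w))) (x + t • w) :=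
      (ContinuousLinearMap.apply ℝ ℝ u).hasFDerivAt.comp _ (hf'd _).hasFDerivAt
    have h2 := h1.comp_hasDerivAt t (hline w t)
    simp only [ContinuousLinearMap.comp_apply, ContinuousLinearMap.apply_apply] at h2
    exact h2
  set c₀ : ℝ := f' x u with hc₀
  set α : ℝ → ℝ := fun t => f' (x + t • u) u + f' (x + t • (-u)) u - 2 * c₀ with hα
  set ψ : ℝ → ℝ := fun t => F (x + t • u) - F (x + t • (-u)) - 2 * t * c₀ with hψ
  have hψd : ∀ t, HasDerivAt ψ (α t) t := by
    intro t
    have h1 := (hFl u t).sub (hFl (-u) t)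
    have h2 : HasDerivAt (fun t : ℝ => 2 * t * c₀) (2 * c₀) t := by
      simpa [mul_assoc, mul_comm] using ((hasDerivAt_id t).const_mul (2 * c₀))
    have := h1.sub h2
    refine this.congr_deriv ?_
    simp [hα, map_neg]
  have hαd : ∀ t, HasDerivAt α
      (iteratedFDeriv ℝ 2 F (x + t • u) ![u, u] - iteratedFDeriv ℝ 2 F (x + t • (-u)) ![u, u]) t := by
    intro t
    have h1 := hf'l u t
    have h2 := hf'l (-u) t
    have := (h1.add h2).sub_const (2 * c₀)
    refine this.congr_deriv ?_
    rw [iteratedFDeriv_two_apply, iteratedFDeriv_two_apply]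
    simp [map_neg]
    ring
  have hα0 : α 0 = 0 := by simp [hα, hc₀]; ring
  have hψ0 : ψ 0 = 0 := by simp [hψ]
  have hαb : ∀ t ∈ Set.Icc (0:ℝ) 1,
      |iteratedFDeriv ℝ 2 F (x + t • u) ![u, u] - iteratedFDeriv ℝ 2 F (x + t • (-u)) ![u, u]|
        ≤ (2 * M * ‖u‖ ^ 3) * t ^ 1 := by
    intro t ht
    have h1 : iteratedFDeriv ℝ 2 F (x + t • u) ![u, u]
        - iteratedFDeriv ℝ 2 F (x + t • (-u)) ![u, u]
        = (iteratedFDeriv ℝ 2 F (x + t • u) - iteratedFDeriv ℝ 2 F (x + t • (-u))) ![u, u] := by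
      simp
    rw [h1]
    calc |(iteratedFDeriv ℝ 2 F (x + t • u) - iteratedFDeriv ℝ 2 F (x + t • (-u))) ![u, u]|
        ≤ ‖iteratedFDeriv ℝ 2 F (x + t • u) - iteratedFDeriv ℝ 2 F (x + t • (-u))‖
          * ∏ i, ‖(![u, u] : Fin 2 → E) i‖ :=
          (iteratedFDeriv ℝ 2 F (x + t • u) - iteratedFDeriv ℝ 2 F (x + t • (-u))).le_opNorm _
      _ ≤ (M * ‖(x + t • u) - (x + t • (-u))‖) * (‖u‖ * ‖u‖) := by
          have hprod : (∏ i, ‖(![u, u] : Fin 2 → E) i‖) = ‖u‖ * ‖u‖ := by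
            simp [Fin.prod_univ_two]
          rw [hprod]
          exact mul_le_mul_of_nonneg_right (hlip _ _) (by positivity)
      _ = (2 * M * ‖u‖ ^ 3) * t ^ 1 := by
          have : (x + t • u) - (x + t • (-u)) = (2 * t) • u := by
            module
          rw [this, norm_smul]
          simp [abs_of_nonneg ht.1, abs_of_nonneg (by linarith [ht.1] : (0:ℝ) ≤ 2 * t)]
          ring
  have hαbound := spsa_deriv_growth hαd hα0 hαb
  have hψb : ∀ t ∈ Set.Icc (0:ℝ) 1, |α t| ≤ (M * ‖u‖ ^ 3) * t ^ 2 := by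
    intro t ht
    have := hαbound t ht
    have h2 : (2 * M * ‖u‖ ^ 3) * t ^ (1 + 1) / (((1:ℕ):ℝ) + 1) = (M * ‖u‖ ^ 3) * t ^ 2 := by
      push_cast; ring
    rw [h2] at this
    exact this
  have hfinal := spsa_deriv_growth hψd hψ0 hψb 1 (Set.right_mem_Icc.2 zero_le_one)
  have h3 : (M * ‖u‖ ^ 3) * (1:ℝ) ^ (2 + 1) / (((2:ℕ):ℝ) + 1) = M * ‖u‖ ^ 3 / 3 := by push_cast; norm_num
  rw [h3] at hfinal
  have h4 : ψ 1 = F (x + u) - F (x - u) - 2 * fderiv ℝ F x u := by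
    simp [hψ, hc₀, hf', ← sub_eq_add_neg]
  rwa [h4] at hfinal


-- integral of a ±1 symmetric r.v. is 0
lemma spsa_integral_sign {Ω : Type*} [MeasurableSpace Ω] (μ : Measure Ω) [IsProbabilityMeasure μ]
    (X : Ω → ℝ) (hm : Measurable X) (hval : ∀ ω, X ω = 1 ∨ X ω = -1)
    (hsym : μ {ω | X ω = 1} = 1 / 2) : ∫ ω, X ω ∂μ = 0 := by
  have hA : MeasurableSet {ω | X ω = 1} := measurableSet_eq_fun hm measurable_const
  have hrep : (fun ω => X ω)
      = fun ω => Set.indicator {ω | X ω = 1} (fun _ => (2:ℝ)) ω - 1 := by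
    ext ω
    by_cases h : X ω = 1
    · rw [h, Set.indicator_of_mem (by exact h)]; norm_num
    · rcases hval ω with h1 | h1
      · exact absurd h1 h
      · rw [h1, Set.indicator_of_notMem (by exact h)]; norm_num
  rw [hrep, integral_sub ((integrable_const (2:ℝ)).indicator hA) (integrable_const 1),
    integral_indicator_const _ hA, measureReal_def, hsym]
  simp [ENNReal.toReal_div]


lemma spsa_decomp {d : ℕ} (w : Fin d → ℝ) :
    (WithLp.equiv 2 (Fin d → ℝ)).symm w = ∑ j, w j • EuclideanSpace.single j (1:ℝ) := by
  have h1 : w = ∑ j, Pi.single j (w j) := by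
    ext k
    simp [Finset.sum_apply, Pi.single_apply]
  calc (WithLp.equiv 2 (Fin d → ℝ)).symm w
      = (WithLp.linearEquiv 2 ℝ (Fin d → ℝ)).symm w := rfl
    _ = ∑ j, (WithLp.linearEquiv 2 ℝ (Fin d → ℝ)).symm (Pi.single j (w j)) := by
        rw [← map_sum, ← h1]
    _ = ∑ j, w j • EuclideanSpace.single j (1:ℝ) := by
        refine Finset.sum_congr rfl fun j _ => ?_
        have : Pi.single j (w j) = w j • (Pi.single j (1:ℝ) : Fin d → ℝ) := by
          ext k; simp [Pi.single_apply, mul_ite]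
        rw [this, _root_.map_smul]
        congr 1

lemma spsa_norm {d : ℕ} (w : Fin d → ℝ) (h : ∀ j, |w j| = 1) :
    ‖(WithLp.equiv 2 (Fin d → ℝ)).symm w‖ = Real.sqrt d := by
  rw [EuclideanSpace.norm_eq]
  congr 1
  calc (∑ j, ‖((WithLp.equiv 2 (Fin d → ℝ)).symm w) j‖ ^ 2)
      = ∑ j : Fin d, (1:ℝ) := by
        refine Finset.sum_congr rfl fun j _ => ?_
        rw [WithLp.equiv_symm_apply, WithLp.ofLp_toLp, Real.norm_eq_abs, h j, one_pow]
    _ = d := by simp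


/-- Bias bound for the SPSA gradient estimator with constant sensitivity
parameter `c`: if `F` is `C³` with third derivative bounded by `M`, then the
bias along coordinate `i` is at most `(M d^{3/2} / 6) c²`. -/
theorem spsa_estimator_bias_bound
    {Ω : Type*} [MeasurableSpace Ω] (μ : Measure Ω) [IsProbabilityMeasure μ]
    {d : ℕ} (F : EuclideanSpace ℝ (Fin d) → ℝ) (hF : ContDiff ℝ 3 F)
    (M : ℝ) (hM : ∀ y, ‖iteratedFDeriv ℝ 3 F y‖ ≤ M)
    (c : ℝ) (hc : 0 < c) (i : Fin d)
    (Δ : Fin d → Ω → ℝ) (hmeas : ∀ j, Measurable (Δ j))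
    (hindep : iIndepFun Δ μ)
    (hval : ∀ j ω, Δ j ω = 1 ∨ Δ j ω = -1)
    (hsym : ∀ j, μ {ω | Δ j ω = 1} = 1 / 2)
    (x : EuclideanSpace ℝ (Fin d)) :
    |(∫ ω, (F (x + c • (WithLp.equiv 2 (Fin d → ℝ)).symm fun j => Δ j ω) -
          F (x - c • (WithLp.equiv 2 (Fin d → ℝ)).symm fun j => Δ j ω)) /
            (2 * c * Δ i ω) ∂μ) -
        fderiv ℝ F x (EuclideanSpace.single i 1)|
      ≤ M * (d : ℝ) ^ ((3 : ℝ) / 2) / 6 * c ^ 2 := by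
  classical
  have hM0 : 0 ≤ M := (norm_nonneg _).trans (hM x)
  have habs : ∀ j ω, |Δ j ω| = 1 := by
    intro j ω; rcases hval j ω with h | h <;> simp [h]
  set L : EuclideanSpace ℝ (Fin d) →L[ℝ] ℝ := fderiv ℝ F x with hLdef
  set v : Ω → EuclideanSpace ℝ (Fin d) :=
    fun ω => (WithLp.equiv 2 (Fin d → ℝ)).symm fun j => Δ j ω with hvdef
  have hvmeas : Measurable v := (WithLp.measurable_toLp 2 _).comp (measurable_pi_lambda _ fun j => hmeas j)
  have hnormv : ∀ ω, ‖v ω‖ = Real.sqrt d := fun ω => spsa_norm _ (fun j => habs j ω)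
  set R : Ω → ℝ :=
    fun ω => F (x + c • v ω) - F (x - c • v ω) - 2 * L (c • v ω) with hRdef
  have hRb : ∀ ω, |R ω| ≤ M * (c * Real.sqrt d) ^ 3 / 3 := by
    intro ω
    have h := spsa_taylor_bound hF hM x (c • v ω)
    rwa [norm_smul, Real.norm_eq_abs, abs_of_pos hc, hnormv ω] at h
  set S : Ω → ℝ := fun ω => ∑ j, L (EuclideanSpace.single j (1:ℝ)) * (Δ j ω * Δ i ω) with hSdef
  set Err : Ω → ℝ := fun ω => R ω * Δ i ω / (2 * c) with hErrdef
  have hLv : ∀ ω, L (v ω) = ∑ j, L (EuclideanSpace.single j (1:ℝ)) * Δ j ω := by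
    intro ω
    rw [hvdef]
    simp only
    rw [spsa_decomp, map_sum]
    refine Finset.sum_congr rfl fun j _ => ?_
    rw [_root_.map_smul, smul_eq_mul, mul_comm]
  have hpt : ∀ ω, (F (x + c • v ω) - F (x - c • v ω)) / (2 * c * Δ i ω)
      = S ω + Err ω := by
    intro ω
    have hnum : F (x + c • v ω) - F (x - c • v ω) = 2 * c * L (v ω) + R ω := by
      rw [hRdef]
      simp only
      rw [_root_.map_smul, smul_eq_mul]
      ring
    have hSω : S ω = L (v ω) * Δ i ω := by
      rw [hSdef]
      simp only
      rw [hLv ω, Finset.sum_mul]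
      exact Finset.sum_congr rfl fun j _ => by ring
    rcases hval i ω with h | h <;>
      rw [hnum, hSω, hErrdef] <;> simp only [h] <;> field_simp <;> ring
  -- integrability
  have hint1 : ∀ j, Integrable (fun ω => Δ j ω * Δ i ω) μ := by
    intro j
    refine Integrable.mono' (integrable_const (1:ℝ))
      ((hmeas j).mul (hmeas i)).aestronglyMeasurable
      (Filter.Eventually.of_forall fun ω => ?_)
    rw [Real.norm_eq_abs, abs_mul, habs, habs]; norm_num
  have hintS : Integrable S μ := by
    rw [hSdef]
    apply integrable_finset_sum
    intro j _
    exact (hint1 j).const_mul _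
  have hmR : Measurable R := by
    have h1 : Measurable fun ω => x + c • v ω :=
      (hvmeas.const_smul c).const_add x
    have h2 : Measurable fun ω => x - c • v ω :=
      measurable_const.sub (hvmeas.const_smul c)
    exact ((hF.continuous.measurable.comp h1).sub (hF.continuous.measurable.comp h2)).sub
      ((L.continuous.measurable.comp (hvmeas.const_smul c)).const_mul 2)
  have hintE : Integrable Err μ := by
    refine Integrable.mono' (integrable_const (M * (c * Real.sqrt d) ^ 3 / 3 / (2 * c)))
      (((hmR.mul (hmeas i)).div_const _).aestronglyMeasurable)
      (Filter.Eventually.of_forall fun ω => ?_)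
    rw [hErrdef]
    simp only
    rw [Real.norm_eq_abs, abs_div, abs_mul, habs i ω, mul_one,
      abs_of_pos (by positivity : (0:ℝ) < 2 * c)]
    gcongr
    exact hRb ω
  -- the integral splits
  have hI : (∫ ω, (F (x + c • v ω) - F (x - c • v ω)) / (2 * c * Δ i ω) ∂μ)
      = (∫ ω, S ω ∂μ) + ∫ ω, Err ω ∂μ := by
    rw [← integral_add hintS hintE]
    exact integral_congr_ae (Filter.Eventually.of_forall fun ω => hpt ω)
  -- expectation of the linear part
  have hXint : ∀ k, Integrable (Δ k) μ := fun k =>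
    Integrable.mono' (integrable_const 1) (hmeas k).aestronglyMeasurable
      (Filter.Eventually.of_forall fun ω => by rw [Real.norm_eq_abs, habs])
  have hprod : ∀ j, (∫ ω, Δ j ω * Δ i ω ∂μ) = if j = i then 1 else 0 := by
    intro j
    by_cases h : j = i
    · subst h
      rw [if_pos rfl]
      have he : ∀ ω, Δ j ω * Δ j ω = 1 := fun ω => by
        rcases hval j ω with h1 | h1 <;> rw [h1] <;> norm_num
      rw [integral_congr_ae (Filter.Eventually.of_forall he)]
      simp
    · rw [if_neg h]
      have hmul : (fun ω => Δ j ω * Δ i ω) = Δ j * Δ i := rfl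
      have := (hindep.indepFun h).integral_mul_eq_mul_integral (hXint j).aestronglyMeasurable (hXint i).aestronglyMeasurable
      rw [hmul, this, spsa_integral_sign μ (Δ j) (hmeas j) (hval j) (hsym j), zero_mul]
  have hSint : (∫ ω, S ω ∂μ) = L (EuclideanSpace.single i 1) := by
    rw [hSdef]
    simp only
    rw [integral_finset_sum _ (fun j _ => (hint1 j).const_mul _)]
    have : ∀ j ∈ Finset.univ, (∫ ω, L (EuclideanSpace.single j (1:ℝ)) * (Δ j ω * Δ i ω) ∂μ)
        = if j = i then L (EuclideanSpace.single i (1:ℝ)) else 0 := by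
      intro j _
      rw [integral_const_mul, hprod j]
      by_cases h : j = i <;> simp [h]
    rw [Finset.sum_congr rfl this, Finset.sum_ite_eq' Finset.univ i]
    simp
  -- bound on the error integral
  have hK : |∫ ω, Err ω ∂μ| ≤ M * (d : ℝ) ^ ((3 : ℝ) / 2) / 6 * c ^ 2 := by
    have hb : ∀ ω, ‖Err ω‖ ≤ M * (c * Real.sqrt d) ^ 3 / 3 / (2 * c) := by
      intro ω
      rw [hErrdef]
      simp only
      rw [Real.norm_eq_abs, abs_div, abs_mul, habs i ω, mul_one,
        abs_of_pos (by positivity : (0:ℝ) < 2 * c)]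
      gcongr
      exact hRb ω
    have h1 : ‖∫ ω, Err ω ∂μ‖ ≤ (M * (c * Real.sqrt d) ^ 3 / 3 / (2 * c)) * (μ Set.univ).toReal :=
      norm_integral_le_of_norm_le_const (Filter.Eventually.of_forall hb)
    rw [measure_univ, ENNReal.toReal_one, mul_one, Real.norm_eq_abs] at h1
    have hd32 : Real.sqrt d ^ 3 = (d : ℝ) ^ ((3:ℝ)/2) := by
      rw [Real.sqrt_eq_rpow, ← Real.rpow_natCast ((d:ℝ) ^ ((1:ℝ)/2)) 3,
        ← Real.rpow_mul (Nat.cast_nonneg d)]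
      norm_num
    have heq : M * (c * Real.sqrt d) ^ 3 / 3 / (2 * c)
        = M * (d : ℝ) ^ ((3 : ℝ) / 2) / 6 * c ^ 2 := by
      rw [mul_pow, ← hd32]
      field_simp
      ring
    rwa [heq] at h1
  calc |(∫ ω, (F (x + c • v ω) - F (x - c • v ω)) / (2 * c * Δ i ω) ∂μ)
        - L (EuclideanSpace.single i 1)|
      = |∫ ω, Err ω ∂μ| := by rw [hI, hSint]; congr 1; ring
    _ ≤ M * (d : ℝ) ^ ((3 : ℝ) / 2) / 6 * c ^ 2 := hK
end

section
/- Let F : ℝ^d → ℝ be three times continuously differentiable with ‖D³F(y)‖ ≤ M for all y ∈ ℝ^d. Let c > 0, let 1 ≤ i ≤ d, and let Δ(1), …, Δ(d) be independent random variables each taking values +1 and −1 with probability 1/2. Then for every x ∈ ℝ^d, the mean-squared error of the SPSA gradient estimator satisfies E[((F(x + cΔ) − F(x − cΔ))/(2c Δ(i)) − ∂F(x)/∂x(i))²] ≤ ( (Σ_{j ≠ i} (∂F(x)/∂x(j))²)^{1/2} + (M d^{3/2}/6) c² )². -/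
open MeasureTheory ProbabilityTheory

set_option maxHeartbeats 1000000 in
/-- Third-order Taylor bound along a line: the symmetric difference minus the first
derivative term is controlled by the bound on the third derivative. -/
lemma spsa_taylor {E : Type*} [NormedAddCommGroup E] [NormedSpace ℝ E]
    (F : E → ℝ) (hF : ContDiff ℝ 3 F) (M : ℝ)
    (hM : ∀ y, ‖iteratedFDeriv ℝ 3 F y‖ ≤ M)
    (x v : E) (c : ℝ) (hc : 0 ≤ c) :
    |F (x + c • v) - F (x - c • v) - 2 * c * fderiv ℝ F x v|
      ≤ M * ‖v‖ ^ 3 / 3 * c ^ 3 := by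
  have hD1 : ContDiff ℝ 2 (fderiv ℝ F) := hF.fderiv_right (by norm_num)
  have hD2 : ContDiff ℝ 1 (fderiv ℝ (fderiv ℝ F)) := hD1.fderiv_right (by norm_num)
  set D3 : E → (E →L[ℝ] E →L[ℝ] E →L[ℝ] ℝ) := fderiv ℝ (fderiv ℝ (fderiv ℝ F)) with hD3def
  set ℓ : ℝ → E := fun t => x + t • v with hℓdef
  have hℓ : ∀ t : ℝ, HasDerivAt ℓ v t := by
    intro t
    have := ((hasDerivAt_id t).smul_const v).const_add x
    rw [one_smul] at this
    exact this
  set g : ℝ → ℝ := fun t => F (ℓ t) with hgdef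
  set g1 : ℝ → ℝ := fun t => fderiv ℝ F (ℓ t) v with hg1def
  set g2 : ℝ → ℝ := fun t => fderiv ℝ (fderiv ℝ F) (ℓ t) v v with hg2def
  set g3 : ℝ → ℝ := fun t => D3 (ℓ t) v v v with hg3def
  have hg : ∀ t, HasDerivAt g (g1 t) t := fun t =>
    ((hF.differentiable (by norm_num) (ℓ t)).hasFDerivAt).comp_hasDerivAt t (hℓ t)
  have hDφ : ∀ t, HasDerivAt (fun t => fderiv ℝ F (ℓ t))
      (fderiv ℝ (fderiv ℝ F) (ℓ t) v) t := fun t =>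
    ((hD1.differentiable (by norm_num) (ℓ t)).hasFDerivAt).comp_hasDerivAt t (hℓ t)
  have hg1 : ∀ t, HasDerivAt g1 (g2 t) t := by
    intro t
    have := (hDφ t).clm_apply (hasDerivAt_const t v)
    simpa using this
  have hDψ : ∀ t, HasDerivAt (fun t => fderiv ℝ (fderiv ℝ F) (ℓ t)) (D3 (ℓ t) v) t := fun t =>
    ((hD2.differentiable (by norm_num) (ℓ t)).hasFDerivAt).comp_hasDerivAt t (hℓ t)
  have hg2 : ∀ t, HasDerivAt g2 (g3 t) t := by
    intro t
    have h1 : HasDerivAt (fun t => fderiv ℝ (fderiv ℝ F) (ℓ t) v) (D3 (ℓ t) v v) t := by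
      have := (hDψ t).clm_apply (hasDerivAt_const t v)
      simpa using this
    have := h1.clm_apply (hasDerivAt_const t v)
    simpa using this
  set K : ℝ := M * ‖v‖ ^ 3 with hKdef
  have hK : ∀ t, |g3 t| ≤ K := by
    intro t
    have h3 : ‖iteratedFDeriv ℝ 1 (fderiv ℝ (fderiv ℝ F)) (ℓ t)‖ ≤ M := by
      rw [norm_iteratedFDeriv_fderiv, norm_iteratedFDeriv_fderiv]
      exact hM (ℓ t)
    have h2 : iteratedFDeriv ℝ 1 (fderiv ℝ (fderiv ℝ F)) (ℓ t) ![v] = D3 (ℓ t) v := by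
      rw [iteratedFDeriv_one_apply]; rfl
    have h1 : ‖D3 (ℓ t) v‖ ≤ M * ‖v‖ := by
      calc ‖D3 (ℓ t) v‖ = ‖iteratedFDeriv ℝ 1 (fderiv ℝ (fderiv ℝ F)) (ℓ t) ![v]‖ := by rw [h2]
        _ ≤ ‖iteratedFDeriv ℝ 1 (fderiv ℝ (fderiv ℝ F)) (ℓ t)‖ * ∏ i, ‖(![v] : Fin 1 → E) i‖ :=
            (iteratedFDeriv ℝ 1 (fderiv ℝ (fderiv ℝ F)) (ℓ t)).le_opNorm _
        _ = ‖iteratedFDeriv ℝ 1 (fderiv ℝ (fderiv ℝ F)) (ℓ t)‖ * ‖v‖ := by simp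
        _ ≤ M * ‖v‖ := mul_le_mul_of_nonneg_right h3 (norm_nonneg v)
    have h4 : ‖D3 (ℓ t) v v‖ ≤ ‖D3 (ℓ t) v‖ * ‖v‖ := (D3 (ℓ t) v).le_opNorm v
    have h5 : ‖D3 (ℓ t) v v v‖ ≤ ‖D3 (ℓ t) v v‖ * ‖v‖ := (D3 (ℓ t) v v).le_opNorm v
    have hv0 : (0:ℝ) ≤ ‖v‖ := norm_nonneg v
    have : ‖D3 (ℓ t) v v v‖ ≤ M * ‖v‖ ^ 3 := by
      calc ‖D3 (ℓ t) v v v‖ ≤ ‖D3 (ℓ t) v v‖ * ‖v‖ := h5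
        _ ≤ ‖D3 (ℓ t) v‖ * ‖v‖ * ‖v‖ :=
            mul_le_mul_of_nonneg_right h4 hv0
        _ ≤ M * ‖v‖ * ‖v‖ * ‖v‖ :=
            mul_le_mul_of_nonneg_right (mul_le_mul_of_nonneg_right h1 hv0) hv0
        _ = M * ‖v‖ ^ 3 := by ring
    simpa [hKdef, Real.norm_eq_abs] using this
  have hK0 : 0 ≤ K := le_trans (abs_nonneg (g3 0)) (hK 0)
  -- second difference function
  set h2 : ℝ → ℝ := fun t => g2 t - g2 (-t) with hh2def
  have hh2 : ∀ t, HasDerivAt h2 (g3 t + g3 (-t)) t := by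
    intro t
    have hneg : HasDerivAt (fun t : ℝ => g2 (-t)) (-g3 (-t)) t := by
      have := (hg2 (-t)).comp t (hasDerivAt_neg t)
      simpa [Function.comp_def] using this
    have := (hg2 t).sub hneg
    rw [sub_neg_eq_add] at this
    exact this
  have hcont2 : Continuous h2 := continuous_iff_continuousAt.2 fun t => (hh2 t).continuousAt
  have hstep1 : ∀ t : ℝ, |h2 t| ≤ 2 * K * |t| := by
    intro t
    have hb : ∀ y ∈ (Set.univ : Set ℝ), ‖g3 y + g3 (-y)‖ ≤ 2 * K := by
      intro y _
      rw [Real.norm_eq_abs]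
      calc |g3 y + g3 (-y)| ≤ |g3 y| + |g3 (-y)| := abs_add_le _ _
        _ ≤ 2 * K := by linarith [hK y, hK (-y)]
    have := convex_univ.norm_image_sub_le_of_norm_hasDerivWithin_le
      (fun y _ => (hh2 y).hasDerivWithinAt) hb (Set.mem_univ (0:ℝ)) (Set.mem_univ t)
    have h20 : h2 0 = 0 := by simp [hh2def]
    simpa [h20, Real.norm_eq_abs] using this
  set h1 : ℝ → ℝ := fun t => g1 t + g1 (-t) - 2 * g1 0 with hh1def
  have hh1 : ∀ t, HasDerivAt h1 (h2 t) t := by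
    intro t
    have hneg : HasDerivAt (fun t : ℝ => g1 (-t)) (-g2 (-t)) t := by
      have := (hg1 (-t)).comp t (hasDerivAt_neg t)
      simpa [Function.comp_def] using this
    have := ((hg1 t).add hneg).sub_const (2 * g1 0)
    rw [← sub_eq_add_neg] at this
    exact this
  have hcont1 : Continuous h1 := continuous_iff_continuousAt.2 fun t => (hh1 t).continuousAt
  have hstep2 : ∀ t : ℝ, 0 ≤ t → |h1 t| ≤ K * t ^ 2 := by
    intro t ht
    have hFTC : ∫ s in (0:ℝ)..t, h2 s = h1 t - h1 0 :=
      intervalIntegral.integral_eq_sub_of_hasDerivAt (fun s _ => hh1 s)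
        (hcont2.intervalIntegrable 0 t)
    have h10 : h1 0 = 0 := by simp [hh1def]; ring
    have hbound : |∫ s in (0:ℝ)..t, h2 s| ≤ |∫ s in (0:ℝ)..t, 2 * K * s| := by
      have hae : ∀ᵐ s ∂(volume.restrict (Set.uIoc (0:ℝ) t)), ‖h2 s‖ ≤ 2 * K * s := by
        refine (ae_restrict_iff' measurableSet_uIoc).2 (ae_of_all _ fun s hs => ?_)
        rw [Set.uIoc_of_le ht] at hs
        have hspos : 0 < s := hs.1
        calc ‖h2 s‖ = |h2 s| := rfl
          _ ≤ 2 * K * |s| := hstep1 s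
          _ = 2 * K * s := by rw [abs_of_pos hspos]
      have hgint : IntervalIntegrable (fun s => 2 * K * s) volume 0 t :=
        (continuous_const.mul continuous_id).intervalIntegrable 0 t
      have := (intervalIntegral.norm_integral_le_of_norm_le ht
          ((ae_restrict_iff' measurableSet_Ioc).1 (by rw [Set.uIoc_of_le ht] at hae; exact hae)) hgint).trans
          (le_abs_self _)
      rwa [Real.norm_eq_abs] at this
    have hval : ∫ s in (0:ℝ)..t, 2 * K * s = K * t ^ 2 := by
      rw [intervalIntegral.integral_const_mul, integral_id]
      ring
    rw [hFTC, h10, sub_zero, hval,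
      abs_of_nonneg (mul_nonneg hK0 (sq_nonneg t))] at hbound
    exact hbound
  set h0 : ℝ → ℝ := fun t => g t - g (-t) - 2 * t * g1 0 with hh0def
  have hh0 : ∀ t, HasDerivAt h0 (h1 t) t := by
    intro t
    have hneg : HasDerivAt (fun t : ℝ => g (-t)) (-g1 (-t)) t := by
      have := (hg (-t)).comp t (hasDerivAt_neg t)
      simpa [Function.comp_def] using this
    have hlin : HasDerivAt (fun t : ℝ => 2 * t * g1 0) (2 * g1 0) t := by
      have := ((hasDerivAt_id t).const_mul (2:ℝ)).mul_const (g1 0)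
      simpa using this
    have := ((hg t).sub hneg).sub hlin
    have heq : g1 t - -g1 (-t) - 2 * g1 0 = h1 t := by simp only [hh1def]; ring
    rw [heq] at this
    exact this
  have hstep3 : |h0 c| ≤ K * c ^ 3 / 3 := by
    have hFTC : ∫ s in (0:ℝ)..c, h1 s = h0 c - h0 0 :=
      intervalIntegral.integral_eq_sub_of_hasDerivAt (fun s _ => hh0 s)
        (hcont1.intervalIntegrable 0 c)
    have h00 : h0 0 = 0 := by simp [hh0def]
    have hbound : |∫ s in (0:ℝ)..c, h1 s| ≤ |∫ s in (0:ℝ)..c, K * s ^ 2| := by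
      have hae : ∀ᵐ s ∂(volume.restrict (Set.uIoc (0:ℝ) c)), ‖h1 s‖ ≤ K * s ^ 2 := by
        refine (ae_restrict_iff' measurableSet_uIoc).2 (ae_of_all _ fun s hs => ?_)
        rw [Set.uIoc_of_le hc] at hs
        exact hstep2 s hs.1.le
      have hgint : IntervalIntegrable (fun s => K * s ^ 2) volume 0 c :=
        (continuous_const.mul (continuous_pow 2)).intervalIntegrable 0 c
      have := (intervalIntegral.norm_integral_le_of_norm_le hc
          ((ae_restrict_iff' measurableSet_Ioc).1 (by rw [Set.uIoc_of_le hc] at hae; exact hae)) hgint).trans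
          (le_abs_self _)
      rwa [Real.norm_eq_abs] at this
    have hval : ∫ s in (0:ℝ)..c, K * s ^ 2 = K * c ^ 3 / 3 := by
      rw [intervalIntegral.integral_const_mul, integral_pow]
      push_cast
      ring
    have habs : |K * c ^ 3 / 3| = K * c ^ 3 / 3 :=
      abs_of_nonneg (div_nonneg (mul_nonneg hK0 (pow_nonneg hc 3)) (by norm_num))
    rw [hFTC, h00, sub_zero, hval, habs] at hbound
    exact hbound
  have hexpr : F (x + c • v) - F (x - c • v) - 2 * c * fderiv ℝ F x v = h0 c := by
    have h1 : ℓ c = x + c • v := rfl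
    have h2 : ℓ (-c) = x - c • v := by
      simp [hℓdef, neg_smul, sub_eq_add_neg]
    have h3 : ℓ 0 = x := by simp [hℓdef]
    simp only [hh0def, hgdef, hg1def, h1, h2, h3]
  rw [hexpr]
  calc |h0 c| ≤ K * c ^ 3 / 3 := hstep3
    _ = M * ‖v‖ ^ 3 / 3 * c ^ 3 := by rw [hKdef]; ring

/-- Mean-squared error bound for the SPSA gradient estimator with constant
sensitivity parameter `c`: it is controlled by the squared off-coordinate
partial derivatives plus a Taylor remainder term of order `c²`. -/
theorem spsa_estimator_mse_bound
    {Ω : Type*} [MeasurableSpace Ω] (μ : Measure Ω) [IsProbabilityMeasure μ]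
    {d : ℕ} (F : EuclideanSpace ℝ (Fin d) → ℝ) (hF : ContDiff ℝ 3 F)
    (M : ℝ) (hM : ∀ y, ‖iteratedFDeriv ℝ 3 F y‖ ≤ M)
    (c : ℝ) (hc : 0 < c) (i : Fin d)
    (Δ : Fin d → Ω → ℝ) (hmeas : ∀ j, Measurable (Δ j))
    (hindep : iIndepFun Δ μ)
    (hval : ∀ j ω, Δ j ω = 1 ∨ Δ j ω = -1)
    (hsym : ∀ j, μ {ω | Δ j ω = 1} = 1 / 2)
    (x : EuclideanSpace ℝ (Fin d)) :
    ∫ ω, ((F (x + c • (WithLp.equiv 2 (Fin d → ℝ)).symm fun j => Δ j ω) -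
          F (x - c • (WithLp.equiv 2 (Fin d → ℝ)).symm fun j => Δ j ω)) /
            (2 * c * Δ i ω) -
        fderiv ℝ F x (EuclideanSpace.single i 1)) ^ 2 ∂μ
      ≤ (Real.sqrt (∑ j ∈ Finset.univ.erase i,
            (fderiv ℝ F x (EuclideanSpace.single j 1)) ^ 2) +
          M * (d : ℝ) ^ ((3 : ℝ) / 2) / 6 * c ^ 2) ^ 2 := by
  classical
  set a : Fin d → ℝ := fun j => fderiv ℝ F x (EuclideanSpace.single j 1) with ha
  have ha' : ∀ j, fderiv ℝ F x (EuclideanSpace.single j 1) = a j := fun j => rfl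
  set v : Ω → EuclideanSpace ℝ (Fin d) :=
    fun ω => (WithLp.equiv 2 (Fin d → ℝ)).symm (fun j => Δ j ω) with hv
  have hv' : ∀ ω, ((WithLp.equiv 2 (Fin d → ℝ)).symm fun j => Δ j ω) = v ω := fun _ => rfl
  simp only [ha', hv']
  set b : ℝ := M * (d : ℝ) ^ ((3 : ℝ) / 2) / 6 * c ^ 2 with hb
  set S : ℝ := ∑ j ∈ Finset.univ.erase i, a j ^ 2 with hS
  -- basic pointwise facts about the signs
  have hΔsq : ∀ j ω, Δ j ω * Δ j ω = 1 := by
    intro j ω; rcases hval j ω with h | h <;> rw [h] <;> norm_num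
  have hΔabs : ∀ j ω, |Δ j ω| = 1 := by
    intro j ω; rcases hval j ω with h | h <;> rw [h] <;> norm_num
  have hΔne : ∀ j ω, Δ j ω ≠ 0 := by
    intro j ω; rcases hval j ω with h | h <;> rw [h] <;> norm_num
  have hM0 : 0 ≤ M := le_trans (norm_nonneg _) (hM x)
  have hd0 : (0:ℝ) ≤ (d : ℝ) ^ ((3 : ℝ) / 2) := Real.rpow_nonneg (Nat.cast_nonneg d) _
  have hb0 : 0 ≤ b := by
    rw [hb]
    apply mul_nonneg (div_nonneg (mul_nonneg hM0 hd0) (by norm_num)) (sq_nonneg c)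
  -- coordinates and norm of v
  have hvcoord : ∀ ω j, v ω j = Δ j ω := fun ω j => rfl
  have hvnorm : ∀ ω, ‖v ω‖ = Real.sqrt d := by
    intro ω
    rw [EuclideanSpace.norm_eq]
    congr 1
    have : ∀ j : Fin d, ‖v ω j‖ ^ 2 = 1 := by
      intro j
      rw [hvcoord, Real.norm_eq_abs, hΔabs]
      norm_num
    rw [Finset.sum_congr rfl fun j _ => this j]
    simp
  -- expansion of the derivative in coordinates
  have hvsum : ∀ ω, v ω = ∑ j, Δ j ω • EuclideanSpace.single j (1:ℝ) := by
    intro ω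
    have := (EuclideanSpace.basisFun (Fin d) ℝ).sum_repr (v ω)
    simp only [EuclideanSpace.basisFun_apply, EuclideanSpace.basisFun_repr, hvcoord] at this
    exact this.symm
  have hL : ∀ ω, fderiv ℝ F x (v ω) = ∑ j, Δ j ω * a j := by
    intro ω
    rw [hvsum, map_sum]
    exact Finset.sum_congr rfl fun j _ => by
      rw [ContinuousLinearMap.map_smul, smul_eq_mul]
  -- the linear part and the remainder
  set A : Ω → ℝ := fun ω => ∑ j ∈ Finset.univ.erase i, a j * (Δ j ω * Δ i ω) with hA
  set R : Ω → ℝ := fun ω =>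
    F (x + c • v ω) - F (x - c • v ω) - 2 * c * fderiv ℝ F x (v ω) with hR
  set B : Ω → ℝ := fun ω => R ω * Δ i ω / (2 * c) with hB
  -- pointwise decomposition
  have halg : ∀ t q P Rv : ℝ, t * t = 1 →
      (2 * c * (t * q + P) + Rv) / (2 * c * t) - q = P * t + Rv * t / (2 * c) := by
    intro t q P Rv ht
    have ht0 : t ≠ 0 := by
      intro h; rw [h, mul_zero] at ht; exact zero_ne_one ht
    have hc0 : c ≠ 0 := ne_of_gt hc
    field_simp
    linear_combination (-(2 * c * P) - Rv) * ht
  have he : ∀ ω, (F (x + c • v ω) - F (x - c • v ω)) / (2 * c * Δ i ω) - a i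
      = A ω + B ω := by
    intro ω
    have ht := hΔsq i ω
    have hsplit : (∑ j, Δ j ω * a j)
        = Δ i ω * a i + ∑ j ∈ Finset.univ.erase i, Δ j ω * a j :=
      (Finset.add_sum_erase _ _ (Finset.mem_univ i)).symm
    have hAeq : A ω = (∑ j ∈ Finset.univ.erase i, Δ j ω * a j) * Δ i ω := by
      rw [hA, Finset.sum_mul]
      exact Finset.sum_congr rfl fun j _ => by ring
    have hRω : R ω = F (x + c • v ω) - F (x - c • v ω) - 2 * c * fderiv ℝ F x (v ω) := rfl
    have hBω : B ω = R ω * Δ i ω / (2 * c) := rfl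
    have hnum2 : F (x + c • v ω) - F (x - c • v ω)
        = 2 * c * (Δ i ω * a i + ∑ j ∈ Finset.univ.erase i, Δ j ω * a j) + R ω := by
      rw [hRω, hL, hsplit]; ring
    rw [hnum2, hAeq, hBω]
    exact halg (Δ i ω) (a i) _ (R ω) ht
  -- bound on the remainder term
  have hBb : ∀ ω, |B ω| ≤ b := by
    intro ω
    have htay := spsa_taylor F hF M hM x (v ω) c hc.le
    rw [hvnorm] at htay
    have hsqrt3 : Real.sqrt d ^ 3 = (d : ℝ) ^ ((3 : ℝ) / 2) := by
      rw [Real.sqrt_eq_rpow, ← Real.rpow_natCast ((d:ℝ) ^ ((1:ℝ)/2)) 3,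
        ← Real.rpow_mul (Nat.cast_nonneg d)]
      norm_num
    rw [hsqrt3] at htay
    have hRb : |R ω| ≤ M * (d : ℝ) ^ ((3 : ℝ) / 2) / 3 * c ^ 3 := htay
    have h2c : (0:ℝ) < 2 * c := by positivity
    rw [hB, abs_div, abs_mul, hΔabs, mul_one, abs_of_pos h2c]
    rw [div_le_iff₀ h2c]
    calc |R ω| ≤ M * (d : ℝ) ^ ((3 : ℝ) / 2) / 3 * c ^ 3 := hRb
      _ = b * (2 * c) := by rw [hb]; ring
  -- integrability of products of signs
  have hint : ∀ j k : Fin d, Integrable (fun ω => Δ j ω * Δ k ω) μ := by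
    intro j k
    refine Integrable.mono' (integrable_const (1:ℝ))
      (((hmeas j).mul (hmeas k)).aestronglyMeasurable) (ae_of_all _ fun ω => ?_)
    rw [Real.norm_eq_abs, abs_mul, hΔabs, hΔabs]
    norm_num
  -- expectation of each sign is zero
  have hEΔ : ∀ j, ∫ ω, Δ j ω ∂μ = 0 := by
    intro j
    have hms : MeasurableSet {ω | Δ j ω = 1} := hmeas j (measurableSet_singleton 1)
    have heq : (fun ω => Δ j ω)
        = fun ω => Set.indicator {ω | Δ j ω = 1} (fun _ => (2:ℝ)) ω - 1 := by
      funext ω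
      by_cases hω : Δ j ω = 1
      · rw [Set.indicator_of_mem (show ω ∈ {ω | Δ j ω = 1} from hω), hω]; norm_num
      · have h2 : Δ j ω = -1 := (hval j ω).resolve_left hω
        rw [Set.indicator_of_notMem (show ω ∉ {ω | Δ j ω = 1} from hω), h2]; norm_num
    rw [heq, integral_sub ((integrable_const (2:ℝ)).indicator hms) (integrable_const 1),
      integral_indicator hms, setIntegral_const, integral_const, measureReal_def, measureReal_def, hsym j, measure_univ]
    rw [ENNReal.toReal_div]
    norm_num
  -- product expectations
  have hmul0 : ∀ j k : Fin d, j ≠ k → ∫ ω, Δ j ω * Δ k ω ∂μ = 0 := by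
    intro j k hjk
    have h := (hindep.indepFun hjk).integral_fun_mul_eq_mul_integral
      (hmeas j).aestronglyMeasurable (hmeas k).aestronglyMeasurable
    have h2 : ∫ ω, Δ j ω * Δ k ω ∂μ = (∫ ω, Δ j ω ∂μ) * ∫ ω, Δ k ω ∂μ := h
    rw [h2, hEΔ j, zero_mul]
  have hsq1 : ∀ j : Fin d, ∫ ω, Δ j ω * Δ j ω ∂μ = 1 := by
    intro j
    have : (fun ω => Δ j ω * Δ j ω) = fun _ => (1:ℝ) := funext fun ω => hΔsq j ω
    rw [this]
    simp
  -- measurability and integrability of A²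
  have hAmeas : Measurable A :=
    Finset.measurable_sum _ fun j _ => measurable_const.mul ((hmeas j).mul (hmeas i))
  set C : ℝ := ∑ j ∈ Finset.univ.erase i, |a j| with hC
  have hAbd : ∀ ω, |A ω| ≤ C := by
    intro ω
    calc |A ω| ≤ ∑ j ∈ Finset.univ.erase i, |a j * (Δ j ω * Δ i ω)| :=
        Finset.abs_sum_le_sum_abs _ _
      _ = C := by
        rw [hC]
        refine Finset.sum_congr rfl fun j _ => ?_
        rw [abs_mul, abs_mul, hΔabs, hΔabs]
        ring
  have hA2int : Integrable (fun ω => A ω ^ 2) μ := by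
    refine Integrable.mono' (integrable_const (C ^ 2))
      ((hAmeas.pow_const 2).aestronglyMeasurable) (ae_of_all _ fun ω => ?_)
    rw [Real.norm_eq_abs, abs_pow, sq_abs, ← sq_abs]
    have h0 : (0:ℝ) ≤ |A ω| := abs_nonneg _
    nlinarith [hAbd ω]
  -- second moment of A
  have hA2 : ∫ ω, A ω ^ 2 ∂μ = S := by
    have hpt : ∀ ω, A ω ^ 2 = ∑ j ∈ Finset.univ.erase i, ∑ k ∈ Finset.univ.erase i,
        a j * a k * (Δ j ω * Δ k ω) := by
      intro ω
      rw [hA, sq, Finset.sum_mul_sum]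
      refine Finset.sum_congr rfl fun j _ => Finset.sum_congr rfl fun k _ => ?_
      linear_combination (a j * a k * (Δ j ω * Δ k ω)) * hΔsq i ω
    calc ∫ ω, A ω ^ 2 ∂μ
        = ∫ ω, ∑ j ∈ Finset.univ.erase i, ∑ k ∈ Finset.univ.erase i,
            a j * a k * (Δ j ω * Δ k ω) ∂μ := integral_congr_ae (ae_of_all _ hpt)
      _ = ∑ j ∈ Finset.univ.erase i, ∫ ω, ∑ k ∈ Finset.univ.erase i,
            a j * a k * (Δ j ω * Δ k ω) ∂μ :=
          integral_finset_sum _ fun j _ =>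
            integrable_finset_sum _ fun k _ => (hint j k).const_mul _
      _ = ∑ j ∈ Finset.univ.erase i, ∑ k ∈ Finset.univ.erase i,
            ∫ ω, a j * a k * (Δ j ω * Δ k ω) ∂μ :=
          Finset.sum_congr rfl fun j _ =>
            integral_finset_sum _ fun k _ => (hint j k).const_mul _
      _ = ∑ j ∈ Finset.univ.erase i, ∑ k ∈ Finset.univ.erase i,
            a j * a k * ∫ ω, Δ j ω * Δ k ω ∂μ :=
          Finset.sum_congr rfl fun j _ => Finset.sum_congr rfl fun k _ =>
            integral_const_mul _ _
      _ = S := by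
        rw [hS]
        refine Finset.sum_congr rfl fun j hj => ?_
        rw [Finset.sum_eq_single j]
        · rw [hsq1 j]; ring
        · intro k _ hkj
          rw [hmul0 j k (Ne.symm hkj), mul_zero]
        · intro hj'; exact absurd hj hj'
  -- rewrite the goal integrand
  have hgoal : ∫ ω, ((F (x + c • v ω) - F (x - c • v ω)) / (2 * c * Δ i ω) - a i) ^ 2 ∂μ
      = ∫ ω, (A ω + B ω) ^ 2 ∂μ :=
    integral_congr_ae (ae_of_all _ fun ω => congrArg (fun y => y ^ 2) (he ω))
  rw [hgoal]
  have hS0 : 0 ≤ S := Finset.sum_nonneg fun j _ => sq_nonneg _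
  rcases eq_or_lt_of_le hS0 with hS0' | hSpos
  · -- degenerate case: all off-coordinate derivatives vanish
    have hA0 : ∀ ω, A ω = 0 := by
      intro ω
      refine Finset.sum_eq_zero fun j hj => ?_
      have haj : a j ^ 2 = 0 :=
        (Finset.sum_eq_zero_iff_of_nonneg fun j _ => sq_nonneg (a j)).1 hS0'.symm j hj
      have : a j = 0 := by
        exact pow_eq_zero_iff (two_ne_zero) |>.1 haj
      rw [this, zero_mul]
    rw [← hS0', Real.sqrt_zero, zero_add]
    calc ∫ ω, (A ω + B ω) ^ 2 ∂μ ≤ ∫ ω, b ^ 2 ∂μ := by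
          refine integral_mono_of_nonneg (ae_of_all _ fun ω => sq_nonneg _)
            (integrable_const _) (ae_of_all _ fun ω => ?_)
          show (A ω + B ω) ^ 2 ≤ b ^ 2
          have h1 := abs_le.1 (hBb ω)
          rw [hA0 ω, zero_add]
          nlinarith [h1.1, h1.2]
      _ = b ^ 2 := by simp
  · -- main case
    set s : ℝ := Real.sqrt S with hsdef
    have hs : 0 < s := Real.sqrt_pos.2 hSpos
    have hs2 : s ^ 2 = S := Real.sq_sqrt hS0
    have key : ∀ ω, s * (A ω + B ω) ^ 2 ≤ (s + b) * A ω ^ 2 + (b * s ^ 2 + b ^ 2 * s) := by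
      intro ω
      obtain ⟨h1, h2⟩ := abs_le.1 (hBb ω)
      nlinarith [mul_nonneg (sub_nonneg.2 h2) (sq_nonneg (A ω + s)),
        mul_nonneg (by linarith : (0:ℝ) ≤ b + B ω) (sq_nonneg (A ω - s)),
        mul_nonneg (mul_nonneg hs.le (sub_nonneg.2 h2)) (by linarith : (0:ℝ) ≤ b + B ω)]
    have hGint : Integrable (fun ω => (s + b) * A ω ^ 2 + (b * s ^ 2 + b ^ 2 * s)) μ :=
      (hA2int.const_mul _).add (integrable_const _)
    have hle : s * ∫ ω, (A ω + B ω) ^ 2 ∂μ ≤ (s + b) * S + (b * s ^ 2 + b ^ 2 * s) := by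
      rw [← integral_const_mul]
      calc ∫ ω, s * (A ω + B ω) ^ 2 ∂μ
          ≤ ∫ ω, ((s + b) * A ω ^ 2 + (b * s ^ 2 + b ^ 2 * s)) ∂μ :=
            integral_mono_of_nonneg
              (ae_of_all _ fun ω => mul_nonneg hs.le (sq_nonneg _)) hGint
              (ae_of_all _ key)
        _ = (s + b) * S + (b * s ^ 2 + b ^ 2 * s) := by
            rw [integral_add (hA2int.const_mul _) (integrable_const _),
              integral_const_mul, hA2, integral_const]
            simp
    have hfin : (s + b) * S + (b * s ^ 2 + b ^ 2 * s) = s * (s + b) ^ 2 := by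
      rw [← hs2]; ring
    rw [hfin] at hle
    exact le_of_mul_le_mul_left hle hs
end
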